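/- For $j = 1,2$, let $M_j \in \mathbb{R}^{N_j \times N_j}$ be symmetric positive definite, $G_j \in \mathbb{R}^{N_\gamma \times N_j}$, and let $\widetilde{U}_{j,0} \in \mathbb{R}^{N_j \times N_{R,j}}$ have linearly independent columns. Set $\widetilde{M}_j := \widetilde{U}_{j,0}^T M_j \widetilde{U}_{j,0}$ and $\widetilde{G}_j := G_j \widetilde{U}_{j,0}$, and suppose $\widetilde{G}_1$ has full row rank ($\operatorname{rank} \widetilde{G}_1 = N_\gamma$). Then the ROM-ROM Schur complement $\widetilde{S} := \widetilde{G}_1 \widetilde{M}_1^{-1} \widetilde{G}_1^T + \widetilde{G}_2 \widetilde{M}_2^{-1} \widetilde{G}_2^T$ is symmetric positive definite; in particular, $\widetilde{S}$ is nonsingular. -/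

import Mathlib

open Matrix

lemma conjT_eq_transpose {m n : ℕ} (A : Matrix (Fin m) (Fin n) ℝ) : Aᴴ = Aᵀ := by
  ext i j; simp [conjTranspose]

lemma posDef_conj {N NR : ℕ} (M : Matrix (Fin N) (Fin N) ℝ) (U : Matrix (Fin N) (Fin NR) ℝ)
    (hM : M.PosDef) (hU : Function.Injective U.mulVec) : (Uᵀ * M * U).PosDef := by
  rw [posDef_iff_dotProduct_mulVec]
  constructor
  · have := isHermitian_conjTranspose_mul_mul U hM.isHermitian
    rwa [conjT_eq_transpose] at this
  · intro x hx
    have h0 : U.mulVec x ≠ 0 := fun h => hx (hU (by simpa using h))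
    have hpos := (posDef_iff_dotProduct_mulVec.mp hM).2 (x := U.mulVec x) h0
    have : x ⬝ᵥ (Uᵀ * M * U) *ᵥ x = (U *ᵥ x) ⬝ᵥ M *ᵥ (U *ᵥ x) := by
      rw [← mulVec_mulVec, ← mulVec_mulVec, dotProduct_mulVec, vecMul_transpose,
        dotProduct_mulVec]
    simpa [this] using hpos

/-- The ROM-ROM Schur complement `S̃ = G̃₁ M̃₁⁻¹ G̃₁ᵀ + G̃₂ M̃₂⁻¹ G̃₂ᵀ`, with
`M̃ⱼ = Ũⱼ₀ᵀ Mⱼ Ũⱼ₀` and `G̃ⱼ = Gⱼ Ũⱼ₀`, is symmetric positive definite (hence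
nonsingular) when `M₁, M₂` are SPD, the `Ũⱼ₀` have linearly independent columns,
and `G̃₁` has full row rank. -/
theorem rom_rom_schur_complement_posDef
    {N1 N2 Nγ NR1 NR2 : ℕ}
    (M1 : Matrix (Fin N1) (Fin N1) ℝ) (M2 : Matrix (Fin N2) (Fin N2) ℝ)
    (G1 : Matrix (Fin Nγ) (Fin N1) ℝ) (G2 : Matrix (Fin Nγ) (Fin N2) ℝ)
    (U1 : Matrix (Fin N1) (Fin NR1) ℝ) (U2 : Matrix (Fin N2) (Fin NR2) ℝ)
    (hM1 : M1.PosDef) (hM2 : M2.PosDef)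
    (hU1 : LinearIndependent ℝ (fun j : Fin NR1 => fun i : Fin N1 => U1 i j))
    (hU2 : LinearIndependent ℝ (fun j : Fin NR2 => fun i : Fin N2 => U2 i j))
    (hG1 : (G1 * U1).rank = Nγ) :
    ((G1 * U1) * (U1ᵀ * M1 * U1)⁻¹ * (G1 * U1)ᵀ
      + (G2 * U2) * (U2ᵀ * M2 * U2)⁻¹ * (G2 * U2)ᵀ).PosDef ∧
      IsUnit ((G1 * U1) * (U1ᵀ * M1 * U1)⁻¹ * (G1 * U1)ᵀ
      + (G2 * U2) * (U2ᵀ * M2 * U2)⁻¹ * (G2 * U2)ᵀ).det := by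
  -- injectivity of mulVec for U1, U2
  have hU1' : Function.Injective U1.mulVec := by
    rw [Matrix.mulVec_injective_iff]
    exact hU1
  have hU2' : Function.Injective U2.mulVec := by
    rw [Matrix.mulVec_injective_iff]
    exact hU2
  have hM1t : (U1ᵀ * M1 * U1).PosDef := posDef_conj M1 U1 hM1 hU1'
  have hM2t : (U2ᵀ * M2 * U2).PosDef := posDef_conj M2 U2 hM2 hU2'
  have hM1i := hM1t.inv
  have hM2i := hM2t.inv
  -- rows of G1*U1 are linearly independent
  have hrows : LinearIndependent ℝ (fun i : Fin Nγ => (G1 * U1) i) := by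
    rw [linearIndependent_iff_card_eq_finrank_span]
    have hr : (Set.range fun i => (G1 * U1) i) = Set.range (G1 * U1).row := rfl
    rw [hr, Set.finrank, ← Matrix.rank_eq_finrank_span_row, hG1, Fintype.card_fin]
  have hGinj : Function.Injective (G1 * U1)ᵀ.mulVec := by
    rw [Matrix.mulVec_injective_iff]
    exact hrows
  have h1 : ((G1 * U1) * (U1ᵀ * M1 * U1)⁻¹ * (G1 * U1)ᵀ).PosDef := by
    have := posDef_conj ((U1ᵀ * M1 * U1)⁻¹) (G1 * U1)ᵀ hM1i hGinj
    simpa [Matrix.transpose_transpose] using this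
  have h2 : ((G2 * U2) * (U2ᵀ * M2 * U2)⁻¹ * (G2 * U2)ᵀ).PosSemidef := by
    have := hM2i.posSemidef.mul_mul_conjTranspose_same (G2 * U2)
    rwa [conjT_eq_transpose] at this
  have hS := h1.add_posSemidef h2
  exact ⟨hS, isUnit_iff_ne_zero.mpr (ne_of_gt hS.det_pos)⟩
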